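/- For every integer k ≥ 1, every integer n ≥ 1, and every real x, the k-fold iterated (p,q)-integral ∫_0^1 ⋯ ∫_0^1 (t_1·t_2·⋯·t_k − x)_n d_{p,q}t_1 ⋯ d_{p,q}t_k equals Σ_{m=0}^{n} (−1)^{n−m} · S_1(n,m) · Σ_{l=0}^{m} binom(m,l) · (−x)^l / [m−l+1]_{p,q}^k. -/

import Mathlib

open Finset

/-- The `(p,q)`-integer `[m]_{p,q} = (p^m - q^m)/(p - q)`. -/
noncomputable def pqInt (p q : ℝ) (m : ℕ) : ℝ := (p ^ m - q ^ m) / (p - q)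

/-- The unsigned Stirling numbers of the first kind, defined by the recurrence
`S1(n+1, m+1) = n * S1(n, m+1) + S1(n, m)`, so that
`x(x+1)⋯(x+n-1) = ∑_{m=0}^{n} S1(n,m) x^m`. -/
def stirling1 : ℕ → ℕ → ℕ
  | 0, 0 => 1
  | 0, _ + 1 => 0
  | _ + 1, 0 => 0
  | n + 1, m + 1 => n * stirling1 n (m + 1) + stirling1 n m

/-- The `(p,q)`-integral `∫_0^1 f(t) d_{p,q}t` for `0 < q < p ≤ 1`. -/
noncomputable def pqIntegral (p q : ℝ) (f : ℝ → ℝ) : ℝ :=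
  (p - q) * ∑' n : ℕ, (q ^ n / p ^ (n + 1)) * f (q ^ n / p ^ (n + 1))

/-- The `k`-fold iterated `(p,q)`-integral
`∫_0^1 ⋯ ∫_0^1 g(t₁ ⋯ t_k) d_{p,q}t₁ ⋯ d_{p,q}t_k`,
taken one variable at a time. -/
noncomputable def iterPqIntegral (p q : ℝ) : ℕ → (ℝ → ℝ) → ℝ
  | 0, g => g 1
  | k + 1, g => pqIntegral p q fun t => iterPqIntegral p q k fun s => g (t * s)

lemma stirling1_eq_zero {n m : ℕ} (h : n < m) : stirling1 n m = 0 := by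
  induction n generalizing m with
  | zero =>
    cases m with
    | zero => omega
    | succ m => rfl
  | succ n ih =>
    cases m with
    | zero => omega
    | succ m =>
      rw [stirling1, ih (by omega), ih (by omega)]
      simp

lemma asc_eq (n : ℕ) : ∀ w : ℝ, ∏ i ∈ range n, (w + i) =
    ∑ m ∈ range (n + 1), (stirling1 n m : ℝ) * w ^ m := by
  induction n with
  | zero => intro w; simp [stirling1]
  | succ n ih =>
    intro w
    rw [Finset.prod_range_succ, ih w]
    set A := ∑ m ∈ range (n + 1), (stirling1 n m : ℝ) * w ^ m with hAdef
    have hA' : ∑ m ∈ range (n + 2), (stirling1 n m : ℝ) * w ^ m = A := by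
      rw [Finset.sum_range_succ, stirling1_eq_zero (Nat.lt_succ_self n)]
      simp
      exact hAdef.symm
    have hshift : ∑ m ∈ range (n + 1), (stirling1 n (m + 1) : ℝ) * w ^ (m + 1)
        = A - (stirling1 n 0 : ℝ) := by
      have h := Finset.sum_range_succ' (fun m => (stirling1 n m : ℝ) * w ^ m) (n + 1)
      rw [hA'] at h
      simp only [pow_zero, mul_one] at h
      linarith
    have hrec : ∀ m : ℕ, (stirling1 (n + 1) (m + 1) : ℝ)
        = n * stirling1 n (m + 1) + stirling1 n m := by
      intro m; rw [stirling1]; push_cast; ring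
    have h0 : (stirling1 (n + 1) 0 : ℝ) = 0 := by simp [stirling1]
    have hn0 : (n : ℝ) * (stirling1 n 0 : ℝ) = 0 := by
      cases n <;> simp [stirling1]
    rw [Finset.sum_range_succ' (fun m => (stirling1 (n + 1) m : ℝ) * w ^ m) (n + 1)]
    have key : ∑ m ∈ range (n + 1), (stirling1 (n + 1) (m + 1) : ℝ) * w ^ (m + 1)
        = (n : ℝ) * (A - (stirling1 n 0 : ℝ))
          + ∑ m ∈ range (n + 1), (stirling1 n m : ℝ) * w ^ (m + 1) := by
      rw [← hshift, Finset.mul_sum, ← Finset.sum_add_distrib]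
      exact Finset.sum_congr rfl fun m _ => by rw [hrec]; ring
    have hAw : ∑ m ∈ range (n + 1), (stirling1 n m : ℝ) * w ^ (m + 1) = A * w := by
      rw [hAdef, Finset.sum_mul]
      exact Finset.sum_congr rfl fun m _ => by ring
    rw [key, hAw, h0]
    nlinarith [hn0]

lemma pqIntegral_sum_monomial (p q : ℝ) (hq : 0 < q) (hqp : q < p)
    {ι : Type*} (s : Finset ι) (a : ι → ℝ) (e : ι → ℕ) :
    pqIntegral p q (fun t => ∑ i ∈ s, a i * t ^ (e i))
      = ∑ i ∈ s, a i / pqInt p q (e i + 1) := by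
  have hp0 : 0 < p := hq.trans hqp
  have hr : ∀ j : ℕ, (q / p) ^ (j + 1) < 1 := by
    intro j
    exact pow_lt_one₀ (by positivity) ((div_lt_one hp0).2 hqp) (Nat.succ_ne_zero j)
  have hw : ∀ m j : ℕ, (q ^ m / p ^ (m + 1)) ^ (j + 1)
      = (1 / p ^ (j + 1)) * ((q / p) ^ (j + 1)) ^ m := by
    intro m j
    have hp0' : p ≠ 0 := by positivity
    have hq0' : q ≠ 0 := by positivity
    rw [div_pow, div_pow, div_pow, ← pow_mul, ← pow_mul, ← pow_mul]
    field_simp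
    ring
  have hsummable : ∀ i : ι, Summable (fun m : ℕ =>
      (q ^ m / p ^ (m + 1)) * (a i * (q ^ m / p ^ (m + 1)) ^ (e i))) := by
    intro i
    have : (fun m : ℕ => (q ^ m / p ^ (m + 1)) * (a i * (q ^ m / p ^ (m + 1)) ^ (e i)))
        = fun m : ℕ => (a i * (1 / p ^ (e i + 1))) * ((q / p) ^ (e i + 1)) ^ m := by
      funext m
      have h := hw m (e i)
      rw [pow_succ] at h
      linear_combination (a i) * h
    rw [this]
    exact (summable_geometric_of_lt_one (by positivity) (hr (e i))).mul_left _
  unfold pqIntegral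
  have hswap : ∑' m : ℕ, (q ^ m / p ^ (m + 1)) * ∑ i ∈ s, a i * (q ^ m / p ^ (m + 1)) ^ (e i)
      = ∑ i ∈ s, ∑' m : ℕ, (q ^ m / p ^ (m + 1)) * (a i * (q ^ m / p ^ (m + 1)) ^ (e i)) := by
    rw [← Summable.tsum_finsetSum (fun i _ => hsummable i)]
    congr 1
    funext m
    rw [Finset.mul_sum]
  rw [hswap, Finset.mul_sum]
  refine Finset.sum_congr rfl fun i _ => ?_
  have heq : (fun m : ℕ => (q ^ m / p ^ (m + 1)) * (a i * (q ^ m / p ^ (m + 1)) ^ (e i)))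
      = fun m : ℕ => (a i * (1 / p ^ (e i + 1))) * ((q / p) ^ (e i + 1)) ^ m := by
    funext m
    have h := hw m (e i)
    rw [pow_succ] at h
    linear_combination (a i) * h
  rw [heq, tsum_mul_left, tsum_geometric_of_lt_one (by positivity) (hr (e i))]
  have hpq : p ^ (e i + 1) - q ^ (e i + 1) > 0 :=
    sub_pos.2 (pow_lt_pow_left₀ hqp hq.le (Nat.succ_ne_zero _))
  have h1r : 1 - (q / p) ^ (e i + 1) ≠ 0 := by
    have : p ^ (e i + 1) * (1 - (q / p) ^ (e i + 1)) = p ^ (e i + 1) - q ^ (e i + 1) := by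
      rw [div_pow]
      field_simp
    intro hc
    rw [hc, mul_zero] at this
    linarith
  unfold pqInt
  rw [div_div_eq_mul_div]
  rw [eq_div_iff (ne_of_gt hpq)]
  rw [div_pow]
  field_simp

lemma iter_sum_monomial (p q : ℝ) (hq : 0 < q) (hqp : q < p) {ι : Type*}
    (s : Finset ι) (e : ι → ℕ) (k : ℕ) :
    ∀ c : ι → ℝ, iterPqIntegral p q k (fun y => ∑ i ∈ s, c i * y ^ e i)
      = ∑ i ∈ s, c i / pqInt p q (e i + 1) ^ k := by
  induction k with
  | zero => intro c; simp [iterPqIntegral]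
  | succ k ih =>
    intro c
    show pqIntegral p q (fun t => iterPqIntegral p q k fun s' =>
        ∑ i ∈ s, c i * (t * s') ^ e i) = _
    have h2 : (fun t : ℝ => iterPqIntegral p q k fun s' => ∑ i ∈ s, c i * (t * s') ^ e i)
        = fun t : ℝ => ∑ i ∈ s, (c i / pqInt p q (e i + 1) ^ k) * t ^ e i := by
      funext t
      have h1 : (fun s' : ℝ => ∑ i ∈ s, c i * (t * s') ^ e i)
          = fun s' : ℝ => ∑ i ∈ s, (c i * t ^ e i) * s' ^ e i := by
        funext s'
        exact Finset.sum_congr rfl fun i _ => by rw [mul_pow]; ring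
      rw [h1, ih (fun i => c i * t ^ e i)]
      exact Finset.sum_congr rfl fun i _ => by ring
    rw [h2, pqIntegral_sum_monomial p q hq hqp s _ e]
    exact Finset.sum_congr rfl fun i _ => by rw [pow_succ, ← div_div]

theorem pqPolyCauchy_first_kind_eq_sum_stirling1
    (p q : ℝ) (hq : 0 < q) (hqp : q < p) (hp : p ≤ 1)
    (k : ℕ) (hk : 1 ≤ k) (n : ℕ) (hn : 1 ≤ n) (x : ℝ) :
    iterPqIntegral p q k (fun y => ∏ i ∈ Finset.range n, (y - x - (i : ℝ))) =
      ∑ m ∈ Finset.range (n + 1),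
        (-1 : ℝ) ^ (n - m) * (stirling1 n m : ℝ) *
          ∑ l ∈ Finset.range (m + 1),
            (m.choose l : ℝ) * (-x) ^ l / pqInt p q (m - l + 1) ^ (k : ℤ) := by
  have hfall : ∀ z : ℝ, ∏ i ∈ range n, (z - i)
      = ∑ m ∈ range (n + 1), (-1 : ℝ) ^ (n - m) * (stirling1 n m : ℝ) * z ^ m := by
    intro z
    have h1 : ∏ i ∈ range n, (z - (i : ℝ)) = (-1 : ℝ) ^ n * ∏ i ∈ range n, (-z + i) := by
      rw [show ((-1 : ℝ)) ^ n = ∏ _i ∈ range n, (-1 : ℝ) by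
            rw [Finset.prod_const, Finset.card_range],
          ← Finset.prod_mul_distrib]
      exact Finset.prod_congr rfl fun i _ => by ring
    rw [h1, asc_eq n (-z), Finset.mul_sum]
    refine Finset.sum_congr rfl fun m hm => ?_
    have hmn : m ≤ n := Nat.lt_succ_iff.mp (Finset.mem_range.mp hm)
    have hsplit : (-1 : ℝ) ^ n = (-1) ^ (n - m) * (-1) ^ m := by
      rw [← pow_add, Nat.sub_add_cancel hmn]
    have hsq : (-1 : ℝ) ^ m * (-1) ^ m = 1 := by
      rw [← pow_add]
      exact Even.neg_one_pow ⟨m, rfl⟩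
    rw [hsplit, neg_pow z m]
    linear_combination ((-1 : ℝ) ^ (n - m) * (stirling1 n m : ℝ) * z ^ m) * hsq
  have hint : (fun y : ℝ => ∏ i ∈ Finset.range n, (y - x - (i : ℝ)))
      = fun y => ∑ ms ∈ (range (n + 1)).sigma (fun m => range (m + 1)),
          ((-1 : ℝ) ^ (n - ms.1) * (stirling1 n ms.1 : ℝ) * (ms.1.choose ms.2 : ℝ)
            * (-x) ^ ms.2) * y ^ (ms.1 - ms.2) := by
    funext y
    have h1 : ∏ i ∈ range n, (y - x - (i : ℝ)) = ∏ i ∈ range n, ((y - x) - i) :=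
      Finset.prod_congr rfl fun i _ => by ring
    rw [h1, hfall (y - x), Finset.sum_sigma]
    refine Finset.sum_congr rfl fun m _ => ?_
    have hb : (y - x) ^ m = ∑ l ∈ range (m + 1), (-x) ^ l * y ^ (m - l) * (m.choose l : ℝ) := by
      have hyx : y - x = -x + y := by ring
      rw [hyx, add_pow]
    rw [hb, Finset.mul_sum]
    exact Finset.sum_congr rfl fun l _ => by ring
  rw [hint, iter_sum_monomial p q hq hqp _ _ k _, Finset.sum_sigma]
  refine Finset.sum_congr rfl fun m _ => ?_
  rw [Finset.mul_sum]
  refine Finset.sum_congr rfl fun l _ => ?_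
  rw [show ((k : ℤ)) = ((k : ℕ) : ℤ) from rfl, zpow_natCast]
  ring
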